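/- The set {π⁻¹ · s(π) : π ∈ S_n} equals the set of 312-avoiding permutations in S_n, and the set {s(π)⁻¹ · π : π ∈ S_n} equals the set of 231-avoiding permutations in S_n. -/

import Mathlib

/-- `l` is a permutation of `{1, …, n}`, written as a word. -/
def IsPermList (n : ℕ) (l : List ℕ) : Prop := l.Perm (List.range' 1 n)

/-- The word obtained from `l` by exchanging the positions of the entries `i` and `i+1`. -/
def swapEntries (i : ℕ) (l : List ℕ) : List ℕ :=
  l.map fun x => if x = i then i + 1 else if x = i + 1 then i else x

/-- Some entry larger than `i+1` appears (strictly) between the entries `i` and `i+1`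
in the word `l`. -/
def ToggleApplies (i : ℕ) (l : List ℕ) : Prop :=
  ∃ a ∈ l, i + 1 < a ∧
    min (l.idxOf i) (l.idxOf (i + 1)) < l.idxOf a ∧
    l.idxOf a < max (l.idxOf i) (l.idxOf (i + 1))

open scoped Classical in
/-- The polyurethane toggle `p i`. -/
noncomputable def toggle (i : ℕ) (l : List ℕ) : List ℕ :=
  if ToggleApplies i l then swapEntries i l else l

lemma max_getD_mem (l : List ℕ) (h : l ≠ []) : l.max?.getD 0 ∈ l := by
  rcases hm : l.max? with _ | m'
  · exact absurd (List.max?_eq_none_iff.mp hm) h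
  · simpa using List.max?_mem hm

lemma length_takeWhile_lt (p : ℕ → Bool) (l : List ℕ) (x : ℕ) (hx : x ∈ l) (hpx : p x = false) :
    (l.takeWhile p).length < l.length := by
  rcases Nat.lt_or_ge (l.takeWhile p).length l.length with h | h
  · exact h
  · have := List.takeWhile_eq_self_iff.mp ((List.takeWhile_sublist p).eq_of_length_le h) x hx
    rw [hpx] at this; exact absurd this (by simp)

lemma length_dropWhile_tail_lt (p : ℕ → Bool) (l : List ℕ) (h : l ≠ []) :
    ((l.dropWhile p).tail).length < l.length := by
  have h1 : (l.dropWhile p).length ≤ l.length := (List.dropWhile_sublist _).length_le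
  have h2 : ((l.dropWhile p).tail).length ≤ (l.dropWhile p).length - 1 := by
    simp [List.length_tail]
  have : 0 < l.length := List.length_pos_iff.mpr h
  omega

/-- West's stack-sorting map `s`: `s([]) = []` and `s(LmR) = s(L) s(R) m`,
where `m` is the largest entry. -/
def stackSort : List ℕ → List ℕ
  | [] => []
  | a :: rest =>
    stackSort ((a :: rest).takeWhile (· ≠ (a :: rest).max?.getD 0)) ++
      stackSort (((a :: rest).dropWhile (· ≠ (a :: rest).max?.getD 0)).tail) ++
      [(a :: rest).max?.getD 0]
termination_by l => l.length
decreasing_by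
  · exact length_takeWhile_lt _ _ _ (max_getD_mem (a :: rest) (by simp)) (by simp)
  · exact length_dropWhile_tail_lt _ _ (by simp)


section AuxSkel

open List

lemma max_mem_le (l : List ℕ) (h : l ≠ []) :
    l.max?.getD 0 ∈ l ∧ ∀ b ∈ l, b ≤ l.max?.getD 0 := by
  rcases hm : l.max? with _ | m'
  · exact absurd (List.max?_eq_none_iff.mp hm) h
  · have := List.max?_eq_some_iff.mp hm
    simpa using this

lemma stackSort_nonempty_eq (l : List ℕ) (h : l ≠ []) :
    stackSort l = stackSort (l.takeWhile (· ≠ l.max?.getD 0)) ++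
      stackSort ((l.dropWhile (· ≠ l.max?.getD 0)).tail) ++ [l.max?.getD 0] := by
  match l with
  | [] => exact absurd rfl h
  | a :: rest => rw [stackSort]

lemma exists_decomp (l : List ℕ) (h : l ≠ []) :
    ∃ L m R, l = L ++ m :: R ∧ stackSort l = stackSort L ++ stackSort R ++ [m] ∧
      (∀ x ∈ L, x ≤ m ∧ x ≠ m) ∧ (∀ x ∈ R, x ≤ m) ∧
      L.length < l.length ∧ R.length < l.length := by
  set m := l.max?.getD 0 with hm
  obtain ⟨hmem, hle⟩ := max_mem_le l h
  set L := l.takeWhile (· ≠ m) with hL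
  set D := l.dropWhile (· ≠ m) with hD
  have hDne : D ≠ [] := by
    intro hnil
    have := List.dropWhile_eq_nil_iff.mp hnil m hmem
    simp at this
  have hhead : D.head hDne = m :=
    not_not.mp (of_decide_eq_false (List.head_dropWhile_not (· ≠ m) hDne))
  have hDeq : D = m :: D.tail := by
    conv_lhs => rw [← List.cons_head_tail hDne, hhead]
  refine ⟨L, m, D.tail, ?_, ?_, ?_, ?_, ?_, ?_⟩
  · rw [← List.takeWhile_append_dropWhile (p := fun x => decide (x ≠ m)) (l := l), ← hL, ← hD, ← hDeq]
  · exact stackSort_nonempty_eq l h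
  · intro x hx
    refine ⟨hle x ((List.takeWhile_sublist _).mem hx), ?_⟩
    have := List.mem_takeWhile_imp hx
    simpa using this
  · intro x hx
    exact hle x (by
      have : x ∈ D := (List.tail_sublist D).mem hx
      exact (List.dropWhile_sublist _).mem this)
  · exact length_takeWhile_lt _ _ m hmem (by simp)
  · exact length_dropWhile_tail_lt _ _ h

end AuxSkel

/-- The inverse of the permutation `l` of `{1, …, n}`, as a word: its `k`-th entry is the
position (1-indexed) of the entry `k` in `l`. -/
def invw (l : List ℕ) : List ℕ := (List.range' 1 l.length).map fun k => l.idxOf k + 1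

/-- The composition `l · m` of permutations written as words: `(l · m) j = l (m j)`. -/
def compw (l m : List ℕ) : List ℕ := m.map fun k => l.getD (k - 1) 0

/-- The group element `π⁻¹ · s(π)`, which encodes the skeleton of `π`: two permutations of
`{1, …, n}` have the same skeleton if and only if their `skel`s coincide. -/
def skel (l : List ℕ) : List ℕ := compw (invw l) (stackSort l)


section AuxSkel2

open List

lemma stackSort_perm (l : List ℕ) : (stackSort l).Perm l := by
  by_cases h : l = []
  · subst h; simp [stackSort]
  · obtain ⟨L, m, R, hl, hs, _, _, h1, h2⟩ := exists_decomp l h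
    rw [hs]
    have pL := stackSort_perm L
    have pR := stackSort_perm R
    calc stackSort L ++ stackSort R ++ [m]
        ~ L ++ R ++ [m] := (pL.append pR).append (Perm.refl _)
      _ ~ L ++ (m :: R) := by
          rw [List.append_assoc]
          exact (Perm.refl L).append (List.perm_append_singleton m R)
      _ = l := hl.symm
termination_by l.length

end AuxSkel2

/-- `l` contains the pattern 231. -/
def Contains231 (l : List ℕ) : Prop :=
  ∃ j₁ j₂ j₃, j₁ < j₂ ∧ j₂ < j₃ ∧ j₃ < l.length ∧
    l.getD j₃ 0 < l.getD j₁ 0 ∧ l.getD j₁ 0 < l.getD j₂ 0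

/-- `l` avoids the pattern 231. -/
def Avoids231 (l : List ℕ) : Prop := ¬ Contains231 l

/-- `l` avoids the pattern 132. -/
def Avoids132 (l : List ℕ) : Prop :=
  ¬ ∃ j₁ j₂ j₃, j₁ < j₂ ∧ j₂ < j₃ ∧ j₃ < l.length ∧
    l.getD j₁ 0 < l.getD j₃ 0 ∧ l.getD j₃ 0 < l.getD j₂ 0

/-- `l` avoids the pattern 312. -/
def Avoids312 (l : List ℕ) : Prop :=
  ¬ ∃ j₁ j₂ j₃, j₁ < j₂ ∧ j₂ < j₃ ∧ j₃ < l.length ∧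
    l.getD j₂ 0 < l.getD j₃ 0 ∧ l.getD j₃ 0 < l.getD j₁ 0


section Aux312

open List

lemma getD_mem_self (A : List ℕ) {j : ℕ} (h : j < A.length) : A.getD j 0 ∈ A := by
  rw [List.getD_eq_getElem _ _ h]; exact List.getElem_mem h

lemma avoids312_nil : Avoids312 [] := by
  rintro ⟨j1, j2, j3, _, _, h3, _⟩
  simp at h3

lemma avoids312_map_add {B : List ℕ} (k : ℕ) (h : Avoids312 B) :
    Avoids312 (B.map (· + k)) := by
  rintro ⟨j1, j2, j3, h12, h23, h3, hv1, hv2⟩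
  rw [List.length_map] at h3
  have e : ∀ j, j < B.length → (B.map (· + k)).getD j 0 = B.getD j 0 + k := by
    intro j hj
    rw [List.getD_eq_getElem _ _ (by simpa using hj), List.getElem_map,
      List.getD_eq_getElem _ _ hj]
  rw [e j2 (by omega), e j3 h3] at hv1
  rw [e j3 h3, e j1 (by omega)] at hv2
  exact h ⟨j1, j2, j3, h12, h23, h3, by omega, by omega⟩

lemma avoids312_append {A B : List ℕ} {c k : ℕ}
    (hA : ∀ v ∈ A, v ≤ k) (hB : ∀ v ∈ B, k + 1 < v) (hc : c = k + 1)
    (h1 : Avoids312 A) (h2 : Avoids312 B) : Avoids312 (A ++ B ++ [c]) := by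
  rintro ⟨j1, j2, j3, h12, h23, h3, hv1, hv2⟩
  have hlen : (A ++ B ++ [c]).length = A.length + B.length + 1 := by
    simp only [List.length_append, List.length_cons, List.length_nil]
  rw [hlen] at h3
  have wA : ∀ j, j < A.length → (A ++ B ++ [c]).getD j 0 = A.getD j 0 := by
    intro j hj
    rw [List.getD_append _ _ _ _ (by simp; omega), List.getD_append _ _ _ _ hj]
  have wB : ∀ j, A.length ≤ j → j < A.length + B.length →
      (A ++ B ++ [c]).getD j 0 = B.getD (j - A.length) 0 := by
    intro j hj1 hj2
    rw [List.getD_append _ _ _ _ (by simp; omega), List.getD_append_right _ _ _ _ hj1]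
  have wc : (A ++ B ++ [c]).getD (A.length + B.length) 0 = c := by
    rw [List.getD_append_right _ _ _ _ (by simp), List.length_append]
    simp
  rcases Nat.lt_or_ge j1 A.length with hj1 | hj1
  · have hw1 : (A ++ B ++ [c]).getD j1 0 ≤ k := by
      rw [wA j1 hj1]; exact hA _ (getD_mem_self A hj1)
    have hj3 : j3 < A.length := by
      by_contra h'
      push_neg at h'
      rcases Nat.lt_or_ge j3 (A.length + B.length) with h'' | h''
      · have := hB _ (getD_mem_self B (show j3 - A.length < B.length by omega))
        rw [← wB j3 h' h''] at this
        omega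
      · have : j3 = A.length + B.length := by omega
        rw [this, wc] at hv2
        omega
    have hj2 : j2 < A.length := by omega
    rw [wA j2 hj2, wA j3 hj3] at hv1
    rw [wA j3 hj3, wA j1 hj1] at hv2
    exact h1 ⟨j1, j2, j3, h12, h23, hj3, hv1, hv2⟩
  · rcases Nat.lt_or_ge j3 (A.length + B.length) with h'' | h''
    · have e1 := wB j1 hj1 (by omega)
      have e2 := wB j2 (by omega) (by omega)
      have e3 := wB j3 (by omega) h''
      rw [e2, e3] at hv1
      rw [e3, e1] at hv2
      exact h2 ⟨j1 - A.length, j2 - A.length, j3 - A.length, by omega, by omega,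
        by omega, hv1, hv2⟩
    · have he : j3 = A.length + B.length := by omega
      rw [he, wc] at hv1
      have := hB _ (getD_mem_self B (show j2 - A.length < B.length by omega))
      rw [← wB j2 (by omega) (by omega)] at this
      omega

lemma posWord_avoids312 (l : List ℕ) (hnd : l.Nodup) :
    Avoids312 ((stackSort l).map (fun x => l.idxOf x + 1)) := by
  by_cases h : l = []
  · subst h
    simpa [stackSort] using avoids312_nil
  · obtain ⟨L, m, R, hl, hs, hLm, hRm, hlen1, hlen2⟩ := exists_decomp l h
    have hnd' : (L ++ m :: R).Nodup := hl ▸ hnd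
    rw [List.nodup_append] at hnd'
    obtain ⟨hndL, hndmR, hdisj⟩ := hnd'
    have hmL : m ∉ L := fun hm => (hLm m hm).2 rfl
    have hmR : m ∉ R := (List.nodup_cons.mp hndmR).1
    have hndR : R.Nodup := (List.nodup_cons.mp hndmR).2
    have hLR : ∀ x ∈ R, x ∉ L := fun x hx hxL => hdisj x hxL x (List.mem_cons_of_mem m hx) rfl
    rw [hs, List.map_append, List.map_append]
    have e1 : (stackSort L).map (fun x => l.idxOf x + 1) =
        (stackSort L).map (fun x => L.idxOf x + 1) := by
      refine List.map_congr_left fun x hx => ?_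
      have hxL : x ∈ L := (stackSort_perm L).mem_iff.mp hx
      rw [hl, show L ++ m :: R = L ++ (m :: R) from rfl, List.idxOf_append_of_mem hxL]
    have e2 : (stackSort R).map (fun x => l.idxOf x + 1) =
        ((stackSort R).map (fun x => R.idxOf x + 1)).map (· + (L.length + 1)) := by
      rw [List.map_map]
      refine List.map_congr_left fun x hx => ?_
      have hxR : x ∈ R := (stackSort_perm R).mem_iff.mp hx
      have hxm : x ≠ m := fun he => hmR (he ▸ hxR)
      rw [hl, List.idxOf_append_of_notMem (hLR x hxR),
        List.idxOf_cons_ne _ (Ne.symm hxm)]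
      simp [Function.comp]
      omega
    have e3 : [m].map (fun x => l.idxOf x + 1) = [L.length + 1] := by
      rw [hl]
      simp [List.idxOf_append_of_notMem hmL]
    rw [e1, e2, e3]
    refine avoids312_append (k := L.length) ?_ ?_ rfl
      (posWord_avoids312 L hndL) (avoids312_map_add _ (posWord_avoids312 R hndR))
    · intro v hv
      simp only [List.mem_map] at hv
      obtain ⟨x, hx, rfl⟩ := hv
      have : L.idxOf x < L.length :=
        List.idxOf_lt_length_iff.mpr ((stackSort_perm L).mem_iff.mp hx)
      omega
    · intro v hv
      simp only [List.mem_map] at hv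
      obtain ⟨x, hx, rfl⟩ := hv
      omega
termination_by l.length

end Aux312


section AuxInv

open List

lemma IsPermList.len {n : ℕ} {l : List ℕ} (h : IsPermList n l) : l.length = n := by
  simpa using h.length_eq

lemma IsPermList.nodup {n : ℕ} {l : List ℕ} (h : IsPermList n l) : l.Nodup :=
  h.nodup_iff.mpr (List.nodup_range' (s := 1) (n := n))

lemma IsPermList.mem_iff' {n : ℕ} {l : List ℕ} (h : IsPermList n l) {x : ℕ} :
    x ∈ l ↔ 1 ≤ x ∧ x < 1 + n := h.mem_iff.trans List.mem_range'_1

lemma invw_length (l : List ℕ) : (invw l).length = l.length := by simp [invw]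

lemma invw_getElem (l : List ℕ) {j : ℕ} (h : j < (invw l).length) :
    (invw l)[j] = l.idxOf (1 + j) + 1 := by
  simp only [invw] at h ⊢
  rw [List.getElem_map, List.getElem_range']
  simp

lemma invw_getD {n : ℕ} {a : List ℕ} (ha : IsPermList n a) {k : ℕ} (hk1 : 1 ≤ k)
    (hk2 : k < 1 + n) : (invw a).getD (k - 1) 0 = a.idxOf k + 1 := by
  rw [List.getD_eq_getElem _ _ (by rw [invw_length, ha.len]; omega),
    invw_getElem _ (by rw [invw_length, ha.len]; omega), show 1 + (k - 1) = k by omega]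

lemma invw_isPermList {n : ℕ} {l : List ℕ} (h : IsPermList n l) :
    IsPermList n (invw l) := by
  have hlen : (invw l).length = n := by rw [invw_length, h.len]
  have hnd : (invw l).Nodup := by
    refine List.Nodup.map_on ?_ (List.nodup_range' (s := 1) (n := l.length))
    intro x hx y hy hxy
    have hxl : x ∈ l := by rw [h.len] at hx; exact h.mem_iff.mpr hx
    have hyl : y ∈ l := by rw [h.len] at hy; exact h.mem_iff.mpr hy
    exact (List.idxOf_inj hxl).mp (by omega)
  have hsub : invw l ⊆ List.range' 1 n := by
    intro v hv
    simp only [invw, List.mem_map] at hv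
    obtain ⟨k, hk, rfl⟩ := hv
    have hkl : k ∈ l := by rw [h.len] at hk; exact h.mem_iff.mpr hk
    have := List.idxOf_lt_length_iff.mpr hkl
    rw [h.len] at this
    exact List.mem_range'_1.mpr ⟨by omega, by omega⟩
  exact (hnd.subperm hsub).perm_of_length_le (by simp [hlen])

lemma invw_invw {n : ℕ} {l : List ℕ} (h : IsPermList n l) : invw (invw l) = l := by
  have hlen : (invw l).length = n := by rw [invw_length, h.len]
  have hnd := h.nodup
  have hnd' : (invw l).Nodup := (invw_isPermList h).nodup
  refine List.ext_getElem (by rw [invw_length, hlen, h.len]) ?_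
  intro j h1 h2
  rw [invw_getElem _ h1]
  set v := l[j] with hv
  have hvmem : v ∈ l := List.getElem_mem h2
  have hv1 : 1 ≤ v ∧ v < 1 + n := h.mem_iff'.mp hvmem
  have hidx : List.idxOf v l = j := List.Nodup.idxOf_getElem hnd j h2
  have hval : (invw l)[v - 1]'(by omega) = 1 + j := by
    rw [invw_getElem _ (by omega)]
    rw [show 1 + (v - 1) = v by omega, hidx]
    omega
  have : List.idxOf (1 + j) (invw l) = v - 1 := by
    rw [← hval]
    exact List.Nodup.idxOf_getElem hnd' (v - 1) (by omega)
  rw [this]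
  omega

lemma compw_length (f m : List ℕ) : (compw f m).length = m.length := by simp [compw]

lemma compw_invw_getElem {n : ℕ} {a b : List ℕ} (ha : IsPermList n a) (hb : IsPermList n b)
    {j : ℕ} (h : j < b.length) :
    (compw (invw a) b)[j]'(by rw [compw_length]; exact h) = a.idxOf (b[j]) + 1 := by
  simp only [compw, List.getElem_map]
  have hmem : b[j] ∈ b := List.getElem_mem h
  have hb1 : 1 ≤ b[j] ∧ b[j] < 1 + n := hb.mem_iff'.mp hmem
  exact invw_getD ha hb1.1 hb1.2

lemma compw_invw_isPermList {n : ℕ} {a b : List ℕ} (ha : IsPermList n a)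
    (hb : IsPermList n b) : IsPermList n (compw (invw a) b) := by
  have hmemab : ∀ x ∈ b, x ∈ a := fun x hx => ha.mem_iff.mpr (hb.mem_iff.mp hx)
  have hlen : (compw (invw a) b).length = n := by rw [compw_length, hb.len]
  have hnd : (compw (invw a) b).Nodup := by
    simp only [compw]
    refine List.Nodup.map_on ?_ hb.nodup
    intro x hx y hy hxy
    have hx1 : 1 ≤ x ∧ x < 1 + n := hb.mem_iff'.mp hx
    have hy1 : 1 ≤ y ∧ y < 1 + n := hb.mem_iff'.mp hy
    rw [invw_getD ha hx1.1 hx1.2, invw_getD ha hy1.1 hy1.2] at hxy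
    exact (List.idxOf_inj (hmemab x hx)).mp (by omega)
  have hsub : compw (invw a) b ⊆ List.range' 1 n := by
    intro v hv
    simp only [compw, List.mem_map] at hv
    obtain ⟨k, hk, rfl⟩ := hv
    have hk1 : 1 ≤ k ∧ k < 1 + n := hb.mem_iff'.mp hk
    rw [invw_getD ha hk1.1 hk1.2]
    have := List.idxOf_lt_length_iff.mpr (hmemab k hk)
    rw [ha.len] at this
    exact List.mem_range'_1.mpr ⟨by omega, by omega⟩
  exact (hnd.subperm hsub).perm_of_length_le (by simp [hlen])

lemma invw_compw {n : ℕ} {a b : List ℕ} (ha : IsPermList n a) (hb : IsPermList n b) :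
    invw (compw (invw a) b) = compw (invw b) a := by
  have hc := compw_invw_isPermList ha hb
  refine List.ext_getElem (by rw [invw_length, hc.len, compw_length, ha.len]) ?_
  intro i h1 h2
  have hin : i < n := by rwa [invw_length, hc.len] at h1
  have hia : i < a.length := by rw [ha.len]; exact hin
  rw [invw_getElem _ h1]
  have haimem : a[i]'hia ∈ b := hb.mem_iff.mpr (ha.mem_iff.mp (List.getElem_mem hia))
  have hjlt : List.idxOf (a[i]'hia) b < b.length := List.idxOf_lt_length_iff.mpr haimem
  have e0 : b[List.idxOf (a[i]'hia) b]'hjlt = a[i]'hia := List.getElem_idxOf hjlt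
  have hcj : (compw (invw a) b)[List.idxOf (a[i]'hia) b]'(by
      rw [compw_length]; exact hjlt) = 1 + i := by
    rw [compw_invw_getElem ha hb hjlt, e0, List.Nodup.idxOf_getElem ha.nodup i hia]
    omega
  have hidx : List.idxOf (1 + i) (compw (invw a) b) = List.idxOf (a[i]'hia) b := by
    rw [← hcj]
    exact List.Nodup.idxOf_getElem hc.nodup _ (by rw [compw_length]; exact hjlt)
  rw [hidx, compw_invw_getElem hb ha hia]

end AuxInv


section AuxPat

open List

lemma contains231_invw {n : ℕ} {m : List ℕ} (hm : IsPermList n m)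
    (h : Contains231 (invw m)) :
    ∃ j₁ j₂ j₃, j₁ < j₂ ∧ j₂ < j₃ ∧ j₃ < m.length ∧
      m.getD j₂ 0 < m.getD j₃ 0 ∧ m.getD j₃ 0 < m.getD j₁ 0 := by
  obtain ⟨j1, j2, j3, h12, h23, h3, hv1, hv2⟩ := h
  rw [invw_length, hm.len] at h3
  have e : ∀ j, j < n → (invw m).getD j 0 = m.idxOf (1 + j) + 1 := by
    intro j hj
    rw [List.getD_eq_getElem _ _ (by rw [invw_length, hm.len]; exact hj),
      invw_getElem _ (by rw [invw_length, hm.len]; exact hj)]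
  rw [e j3 h3, e j1 (by omega)] at hv1
  rw [e j1 (by omega), e j2 (by omega)] at hv2
  have hamem : 1 + j1 ∈ m := hm.mem_iff'.mpr ⟨by omega, by omega⟩
  have hbmem : 1 + j2 ∈ m := hm.mem_iff'.mpr ⟨by omega, by omega⟩
  have hcmem : 1 + j3 ∈ m := hm.mem_iff'.mpr ⟨by omega, by omega⟩
  have hpa := List.idxOf_lt_length_iff.mpr hamem
  have hpb := List.idxOf_lt_length_iff.mpr hbmem
  have hpc := List.idxOf_lt_length_iff.mpr hcmem
  have ga : m.getD (m.idxOf (1 + j1)) 0 = 1 + j1 := by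
    rw [List.getD_eq_getElem _ _ hpa, List.getElem_idxOf hpa]
  have gb : m.getD (m.idxOf (1 + j2)) 0 = 1 + j2 := by
    rw [List.getD_eq_getElem _ _ hpb, List.getElem_idxOf hpb]
  have gc : m.getD (m.idxOf (1 + j3)) 0 = 1 + j3 := by
    rw [List.getD_eq_getElem _ _ hpc, List.getElem_idxOf hpc]
  exact ⟨m.idxOf (1 + j3), m.idxOf (1 + j1), m.idxOf (1 + j2), by omega, by omega,
    hpb, by rw [ga, gb]; omega, by rw [gb, gc]; omega⟩

lemma contains231_prefix {L t : List ℕ} (h : Contains231 L) : Contains231 (L ++ t) := by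
  obtain ⟨j1, j2, j3, h12, h23, h3, hv1, hv2⟩ := h
  have e : ∀ j, j < L.length → (L ++ t).getD j 0 = L.getD j 0 := fun j hj =>
    List.getD_append _ _ _ _ hj
  exact ⟨j1, j2, j3, h12, h23, by rw [List.length_append]; omega,
    by rw [e j3 h3, e j1 (by omega)]; exact hv1,
    by rw [e j1 (by omega), e j2 (by omega)]; exact hv2⟩

lemma contains231_suffix {t R : List ℕ} (h : Contains231 R) : Contains231 (t ++ R) := by
  obtain ⟨j1, j2, j3, h12, h23, h3, hv1, hv2⟩ := h
  have e : ∀ j, j < R.length → (t ++ R).getD (t.length + j) 0 = R.getD j 0 := by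
    intro j hj
    rw [List.getD_append_right _ _ _ _ (by omega)]
    congr 1
    omega
  exact ⟨t.length + j1, t.length + j2, t.length + j3, by omega, by omega,
    by rw [List.length_append]; omega,
    by rw [e j3 h3, e j1 (by omega)]; exact hv1,
    by rw [e j1 (by omega), e j2 (by omega)]; exact hv2⟩

lemma stackSort_sorted (l : List ℕ) (hnd : l.Nodup) (h231 : Avoids231 l) :
    (stackSort l).Pairwise (· < ·) := by
  by_cases h : l = []
  · subst h; simp [stackSort]
  · obtain ⟨L, m, R, hl, hs, hLm, hRm, hlen1, hlen2⟩ := exists_decomp l h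
    have hnd' : (L ++ m :: R).Nodup := hl ▸ hnd
    rw [List.nodup_append] at hnd'
    obtain ⟨hndL, hndmR, hdisj⟩ := hnd'
    have hmR : m ∉ R := (List.nodup_cons.mp hndmR).1
    have hndR : R.Nodup := (List.nodup_cons.mp hndmR).2
    have h231L : Avoids231 L := fun hc => h231 (by rw [hl]; exact contains231_prefix hc)
    have h231R : Avoids231 R := fun hc => h231 (by
      rw [hl, show L ++ m :: R = (L ++ [m]) ++ R by simp]
      exact contains231_suffix hc)
    have cross : ∀ a ∈ L, ∀ b ∈ R, a < b := by
      intro a ha b hb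
      by_contra hab
      push_neg at hab
      have hne : b ≠ a := fun he => hdisj a ha a (List.mem_cons_of_mem m (he ▸ hb)) rfl
      have hba : b < a := lt_of_le_of_ne hab hne
      have hia := List.idxOf_lt_length_iff.mpr ha
      have hib := List.idxOf_lt_length_iff.mpr hb
      apply h231
      have hllen : l.length = L.length + 1 + R.length := by
        rw [hl]; simp; omega
      refine ⟨L.idxOf a, L.length, L.length + 1 + R.idxOf b, hia, by omega,
        by omega, ?_, ?_⟩
      · -- getD l j₃ < getD l j₁ : b < a
        have g3 : l.getD (L.length + 1 + R.idxOf b) 0 = b := by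
          rw [hl, List.getD_append_right _ _ _ _ (by omega)]
          rw [show L.length + 1 + R.idxOf b - L.length = R.idxOf b + 1 by omega]
          show R.getD (R.idxOf b) 0 = b
          rw [List.getD_eq_getElem _ _ hib, List.getElem_idxOf hib]
        have g1 : l.getD (L.idxOf a) 0 = a := by
          rw [hl, List.getD_append _ _ _ _ hia, List.getD_eq_getElem _ _ hia,
            List.getElem_idxOf hia]
        rw [g3, g1]
        exact hba
      · -- getD l j₁ < getD l j₂ : a < m
        have g1 : l.getD (L.idxOf a) 0 = a := by
          rw [hl, List.getD_append _ _ _ _ hia, List.getD_eq_getElem _ _ hia,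
            List.getElem_idxOf hia]
        have g2 : l.getD L.length 0 = m := by
          rw [hl, List.getD_append_right _ _ _ _ (le_refl _), Nat.sub_self]
          rfl
        rw [g1, g2]
        exact lt_of_le_of_ne (hLm a ha).1 (hLm a ha).2
    rw [hs]
    refine List.pairwise_append.mpr ⟨List.pairwise_append.mpr
      ⟨stackSort_sorted L hndL h231L, stackSort_sorted R hndR h231R, ?_⟩, by simp, ?_⟩
    · intro x hx y hy
      exact cross x ((stackSort_perm L).mem_iff.mp hx) y ((stackSort_perm R).mem_iff.mp hy)
    · intro x hx y hy
      rw [List.mem_singleton] at hy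
      subst hy
      rcases List.mem_append.mp hx with hx' | hx'
      · have hxL := (stackSort_perm L).mem_iff.mp hx'
        exact lt_of_le_of_ne (hLm x hxL).1 (hLm x hxL).2
      · have hxR := (stackSort_perm R).mem_iff.mp hx'
        exact lt_of_le_of_ne (hRm x hxR) (fun he => hmR (he ▸ hxR))
termination_by l.length

lemma stackSort_eq_range {n : ℕ} {l : List ℕ} (h : IsPermList n l) (h231 : Avoids231 l) :
    stackSort l = List.range' 1 n := by
  haveI : Std.Antisymm (α := ℕ) (· < ·) := ⟨fun a b h1 h2 => absurd h2 (lt_asymm h1)⟩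
  exact List.Perm.eq_of_pairwise'
    (stackSort_sorted l h.nodup h231) (List.pairwise_lt_range' (s := 1) (n := n)) ((stackSort_perm l).trans h)

lemma compw_invw_range {n : ℕ} {l : List ℕ} (h : IsPermList n l) :
    compw (invw l) (List.range' 1 n) = invw l := by
  refine List.ext_getElem (by rw [compw_length, List.length_range', invw_length, h.len]) ?_
  intro j h1 h2
  simp only [compw, List.getElem_map, List.getElem_range']
  rw [show 1 + 1 * j - 1 = j by omega, List.getD_eq_getElem _ _ h2]

lemma invw_range (n : ℕ) : invw (List.range' 1 n) = List.range' 1 n := by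
  refine List.ext_getElem (by rw [invw_length]) ?_
  intro j h1 h2
  rw [invw_getElem _ h1, List.getElem_range']
  have h' : (List.range' 1 n)[j]'h2 = 1 + 1 * j := List.getElem_range' h2
  have h'' := List.Nodup.idxOf_getElem (List.nodup_range' (s := 1) (n := n)) j h2
  rw [h'] at h''
  rw [one_mul] at h'' ⊢
  rw [h'']
  omega

lemma compw_range_left {n : ℕ} {m : List ℕ} (h : IsPermList n m) :
    compw (List.range' 1 n) m = m := by
  have e : ∀ k ∈ m, (List.range' 1 n).getD (k - 1) 0 = k := by
    intro k hk
    have hk1 := h.mem_iff'.mp hk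
    rw [List.getD_eq_getElem _ _ (by rw [List.length_range']; omega), List.getElem_range']
    omega
  show m.map _ = m
  conv_rhs => rw [← List.map_id m]
  exact List.map_congr_left fun k hk => by rw [e k hk]; rfl

lemma skel_eq_posWord {n : ℕ} {l : List ℕ} (h : IsPermList n l) :
    compw (invw l) (stackSort l) = (stackSort l).map (fun x => l.idxOf x + 1) := by
  refine List.map_congr_left fun k hk => ?_
  have hkl : k ∈ l := (stackSort_perm l).mem_iff.mp hk
  have hk1 := h.mem_iff'.mp hkl
  exact invw_getD h hk1.1 hk1.2

end AuxPat

/-- `{π⁻¹ · s(π) : π ∈ Sₙ}` is the set of 312-avoiding permutations in `Sₙ`, and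
`{s(π)⁻¹ · π : π ∈ Sₙ}` is the set of 231-avoiding permutations in `Sₙ`. -/
theorem skel_image_eq_avoiders (n : ℕ) :
    {m : List ℕ | ∃ l, IsPermList n l ∧ m = compw (invw l) (stackSort l)} =
        {m : List ℕ | IsPermList n m ∧ Avoids312 m} ∧
      {m : List ℕ | ∃ l, IsPermList n l ∧ m = compw (invw (stackSort l)) l} =
        {m : List ℕ | IsPermList n m ∧ Avoids231 m} := by
  constructor
  · ext m
    simp only [Set.mem_setOf_eq]
    constructor
    · rintro ⟨l, hl, rfl⟩
      refine ⟨compw_invw_isPermList hl ((stackSort_perm l).trans hl), ?_⟩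
      rw [skel_eq_posWord hl]
      exact posWord_avoids312 l hl.nodup
    · rintro ⟨hm, hav⟩
      refine ⟨invw m, invw_isPermList hm, ?_⟩
      have h231 : Avoids231 (invw m) := fun hc => hav (contains231_invw hm hc)
      rw [stackSort_eq_range (invw_isPermList hm) h231,
        compw_invw_range (invw_isPermList hm), invw_invw hm]
  · ext m
    simp only [Set.mem_setOf_eq]
    constructor
    · rintro ⟨l, hl, rfl⟩
      have hsl : IsPermList n (stackSort l) := (stackSort_perm l).trans hl
      have hskel : IsPermList n (compw (invw l) (stackSort l)) :=
        compw_invw_isPermList hl hsl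
      have heq : compw (invw (stackSort l)) l = invw (compw (invw l) (stackSort l)) :=
        (invw_compw hl hsl).symm
      rw [heq]
      refine ⟨invw_isPermList hskel, ?_⟩
      intro hc
      have hav : Avoids312 (compw (invw l) (stackSort l)) := by
        rw [skel_eq_posWord hl]
        exact posWord_avoids312 l hl.nodup
      exact hav (contains231_invw hskel hc)
    · rintro ⟨hm, hav⟩
      refine ⟨m, hm, ?_⟩
      rw [stackSort_eq_range hm hav, invw_range, compw_range_left hm]
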